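/- Let B ⊆ ℝ² be such that for every x₀ ∈ ℝ the vertical slice B ∩ ({x₀} × ℝ) is either empty or connected. Let (c_i)_{i ∈ I} = ((x_i, y_i))_{i ∈ I} be a family of pairwise distinct points of the interior Int(B), with only finitely many c_i on each vertical line, and let ε = (ε_i)_{i∈I} ∈ {+1,−1}^I satisfy: for all i, j ∈ I with x_i = x_j and y_i > y_j, ε_i ≥ ε_j. Then for every x̄ ∈ pr₁(B), the vertical slice S_ε ∩ ({x̄} × ℝ) is nonempty and connected, where S_ε := B \ ⋃_{i ∈ I} l^{ε_i}(c_i). -/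

import Mathlib

/-- The vertical cut of `B ⊆ ℝ²` at the point `c` with sign `ε`:
`l^ε(c) = B ∩ {(x,y) | x = c.1 ∧ ε·y ≥ ε·c.2}`. -/
def vcut (B : Set (ℝ × ℝ)) (c : ℝ × ℝ) (ε : ℝ) : Set (ℝ × ℝ) :=
  {p : ℝ × ℝ | p ∈ B ∧ p.1 = c.1 ∧ ε * c.2 ≤ ε * p.2}

/-- If every vertical slice of `B` is empty or connected, the points `c i` are pairwise
distinct, lie in the interior of `B`, with finitely many on each vertical line, and the
signs are nondecreasing along each vertical line, then every vertical slice of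
`S_ε = B \ l^ε` over a point of `pr₁(B)` is nonempty and connected. -/
theorem stmt7 {I : Type*} (B : Set (ℝ × ℝ))
    (hslice : ∀ x₀ : ℝ, B ∩ {p : ℝ × ℝ | p.1 = x₀} = ∅ ∨
      IsConnected (B ∩ {p : ℝ × ℝ | p.1 = x₀}))
    (c : I → ℝ × ℝ) (hinj : Function.Injective c) (hc : ∀ i, c i ∈ interior B)
    (hfin : ∀ x₀ : ℝ, {i : I | (c i).1 = x₀}.Finite)
    (ε : I → ℝ) (hε : ∀ i, ε i = 1 ∨ ε i = -1)
    (hmono : ∀ i j, (c i).1 = (c j).1 → (c j).2 < (c i).2 → ε j ≤ ε i)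
    (x₀ : ℝ) (hx : x₀ ∈ Prod.fst '' B) :
    IsConnected ((B \ ⋃ i, vcut B (c i) (ε i)) ∩ {p : ℝ × ℝ | p.1 = x₀}) := by
  classical
  -- the slice as a subset of ℝ
  set J : Set ℝ := {y : ℝ | (x₀, y) ∈ B \ ⋃ i, vcut B (c i) (ε i)} with hJdef
  have himg : (B \ ⋃ i, vcut B (c i) (ε i)) ∩ {p : ℝ × ℝ | p.1 = x₀}
      = Prod.mk x₀ '' J := by
    ext p
    constructor
    · rintro ⟨hp, hpx⟩
      simp only [Set.mem_setOf_eq] at hpx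
      exact ⟨p.2, by simpa [hJdef, ← hpx] using hp, by simp [← hpx]⟩
    · rintro ⟨y, hy, rfl⟩
      exact ⟨hy, rfl⟩
  -- the slice of B as a subset of ℝ
  set T : Set ℝ := {y : ℝ | (x₀, y) ∈ B} with hTdef
  have hTimg : B ∩ {p : ℝ × ℝ | p.1 = x₀} = Prod.mk x₀ '' T := by
    ext p
    constructor
    · rintro ⟨hp, hpx⟩
      simp only [Set.mem_setOf_eq] at hpx
      exact ⟨p.2, by simpa [hTdef, ← hpx] using hp, by simp [← hpx]⟩
    · rintro ⟨y, hy, rfl⟩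
      exact ⟨hy, rfl⟩
  have hTne : (B ∩ {p : ℝ × ℝ | p.1 = x₀}).Nonempty := by
    obtain ⟨p, hp, hpx⟩ := hx
    exact ⟨p, hp, hpx⟩
  have hTconn : IsConnected (B ∩ {p : ℝ × ℝ | p.1 = x₀}) := by
    rcases hslice x₀ with h | h
    · exact absurd h (Set.nonempty_iff_ne_empty.mp hTne)
    · exact h
  have hemb : Topology.IsEmbedding (Prod.mk x₀ : ℝ → ℝ × ℝ) := isEmbedding_prodMkRight x₀
  have hTord : T.OrdConnected := by
    have : IsPreconnected (Prod.mk x₀ '' T) := by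
      rw [← hTimg]; exact hTconn.isPreconnected
    exact (hemb.isInducing.isPreconnected_image.mp this).ordConnected
  -- J is order-connected
  have hJord : J.OrdConnected := by
    constructor
    rintro y₁ ⟨hy₁B, hy₁c⟩ y₂ ⟨hy₂B, hy₂c⟩ y ⟨hl, hr⟩
    refine ⟨hTord.out hy₁B hy₂B ⟨hl, hr⟩, ?_⟩
    intro hmem
    simp only [Set.mem_iUnion] at hmem
    obtain ⟨i, hiB, hix, hiy⟩ := hmem
    rcases hε i with h1 | h1
    · apply hy₂c
      simp only [Set.mem_iUnion]
      exact ⟨i, hy₂B, hix, by nlinarith⟩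
    · apply hy₁c
      simp only [Set.mem_iUnion]
      exact ⟨i, hy₁B, hix, by nlinarith⟩
  -- Nonemptiness of J
  have hJne : J.Nonempty := by
    set F : Finset I := (hfin x₀).toFinset with hF
    have hFmem : ∀ i, i ∈ F ↔ (c i).1 = x₀ := by
      intro i; simp [hF, Set.Finite.mem_toFinset]
    -- points on the vertical line near `c i` lie in `B`
    have hnear : ∀ i ∈ F, ∃ δ > 0, ∀ y : ℝ, |y - (c i).2| < δ → (x₀, y) ∈ B := by
      intro i hi
      obtain ⟨δ, hδ, hball⟩ := Metric.mem_nhds_iff.mp (mem_interior_iff_mem_nhds.mp (hc i))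
      refine ⟨δ, hδ, fun y hy => hball ?_⟩
      have hci : c i = (x₀, (c i).2) := by
        rw [← (hFmem i).mp hi]
      rw [Metric.mem_ball, hci, Prod.dist_eq]
      simp only [dist_self, Real.dist_eq]
      exact max_lt hδ hy
    -- membership criterion for J
    have hmemJ : ∀ y : ℝ, (x₀, y) ∈ B →
        (∀ i ∈ F, (ε i = 1 → y < (c i).2) ∧ (ε i = -1 → (c i).2 < y)) → y ∈ J := by
      intro y hB hcond
      refine ⟨hB, ?_⟩
      intro hmem
      simp only [Set.mem_iUnion] at hmem
      obtain ⟨i, hiB, hix, hiy⟩ := hmem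
      have hiF : i ∈ F := (hFmem i).mpr hix.symm
      rcases hε i with h1 | h1
      · have := (hcond i hiF).1 h1; rw [h1] at hiy; nlinarith
      · have := (hcond i hiF).2 h1; rw [h1] at hiy; nlinarith
    set D : Finset I := F.filter (fun i => ε i = -1) with hD
    set U : Finset I := F.filter (fun i => ε i = 1) with hU
    by_cases hFne : F.Nonempty
    · by_cases hDne : D.Nonempty
      · -- there is a downward cut; take the highest one
        obtain ⟨i₀, hi₀D, hi₀max⟩ := Finset.exists_max_image D (fun i => (c i).2) hDne
        have hi₀F : i₀ ∈ F := (Finset.mem_filter.mp hi₀D).1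
        have hi₀ε : ε i₀ = -1 := (Finset.mem_filter.mp hi₀D).2
        obtain ⟨δ, hδ, hB⟩ := hnear i₀ hi₀F
        have hupper : ∀ j ∈ U, (c i₀).2 < (c j).2 := by
          intro j hj
          have hjF : j ∈ F := (Finset.mem_filter.mp hj).1
          have hjε : ε j = 1 := (Finset.mem_filter.mp hj).2
          by_contra h
          push_neg at h
          rcases eq_or_lt_of_le h with heq | hlt
          · have hcc : c j = c i₀ :=
              Prod.ext (by rw [(hFmem j).mp hjF, (hFmem i₀).mp hi₀F]) heq
            have := hinj hcc
            rw [this, hi₀ε] at hjε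
            norm_num at hjε
          · have := hmono i₀ j (by rw [(hFmem j).mp hjF, (hFmem i₀).mp hi₀F]) hlt
            rw [hjε, hi₀ε] at this
            norm_num at this
        by_cases hUne : U.Nonempty
        · obtain ⟨j₀, hj₀U, hj₀min⟩ := Finset.exists_min_image U (fun j => (c j).2) hUne
          set m := (c j₀).2 with hm
          have hlt : (c i₀).2 < m := hupper j₀ hj₀U
          set y : ℝ := (c i₀).2 + min (δ/2) ((m - (c i₀).2)/2) with hy
          have hpos : 0 < min (δ/2) ((m - (c i₀).2)/2) := by
            apply lt_min <;> linarith
          refine ⟨y, hmemJ y (hB y ?_) ?_⟩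
          · rw [hy]
            rw [abs_of_pos (by linarith [hpos])]
            have : min (δ/2) ((m - (c i₀).2)/2) ≤ δ/2 := min_le_left _ _
            linarith
          · intro i hiF
            constructor
            · intro hi1
              have hiU : i ∈ U := Finset.mem_filter.mpr ⟨hiF, hi1⟩
              have h1 : m ≤ (c i).2 := hj₀min i hiU
              have h2 : min (δ/2) ((m - (c i₀).2)/2) ≤ (m - (c i₀).2)/2 := min_le_right _ _
              rw [hy]; linarith
            · intro hi1
              have hiD : i ∈ D := Finset.mem_filter.mpr ⟨hiF, hi1⟩
              have h1 : (c i).2 ≤ (c i₀).2 := hi₀max i hiD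
              rw [hy]; linarith
        · -- no upward cuts
          set y : ℝ := (c i₀).2 + δ/2 with hy
          refine ⟨y, hmemJ y (hB y ?_) ?_⟩
          · rw [hy, abs_of_pos (by linarith)]; linarith
          · intro i hiF
            constructor
            · intro hi1
              exact absurd ⟨i, Finset.mem_filter.mpr ⟨hiF, hi1⟩⟩ hUne
            · intro hi1
              have h1 : (c i).2 ≤ (c i₀).2 := hi₀max i (Finset.mem_filter.mpr ⟨hiF, hi1⟩)
              rw [hy]; linarith
      · -- no downward cuts; there must be an upward one
        have hUne : U.Nonempty := by
          obtain ⟨i, hi⟩ := hFne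
          rcases hε i with h1 | h1
          · exact ⟨i, Finset.mem_filter.mpr ⟨hi, h1⟩⟩
          · exact absurd ⟨i, Finset.mem_filter.mpr ⟨hi, h1⟩⟩ hDne
        obtain ⟨j₀, hj₀U, hj₀min⟩ := Finset.exists_min_image U (fun j => (c j).2) hUne
        have hj₀F : j₀ ∈ F := (Finset.mem_filter.mp hj₀U).1
        obtain ⟨δ, hδ, hB⟩ := hnear j₀ hj₀F
        set y : ℝ := (c j₀).2 - δ/2 with hy
        refine ⟨y, hmemJ y (hB y ?_) ?_⟩
        · rw [hy]
          rw [abs_of_neg (by linarith)]; linarith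
        · intro i hiF
          constructor
          · intro hi1
            have h1 : (c j₀).2 ≤ (c i).2 := hj₀min i (Finset.mem_filter.mpr ⟨hiF, hi1⟩)
            rw [hy]; linarith
          · intro hi1
            exact absurd ⟨i, Finset.mem_filter.mpr ⟨hiF, hi1⟩⟩ hDne
    · -- no cuts on this vertical line at all
      obtain ⟨p, hpB, hpx⟩ := hx
      refine ⟨p.2, hmemJ p.2 ?_ ?_⟩
      · have : p = (x₀, p.2) := Prod.ext hpx rfl
        rwa [← this]
      · intro i hiF
        exact absurd ⟨i, hiF⟩ hFne
  rw [himg]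
  exact ⟨hJne.image _, (hemb.isInducing.isPreconnected_image).mpr hJord.isPreconnected⟩
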